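/- Let q be an odd prime with q ≡ 3 (mod 4), let ν generate the group of units (ZMod q)ˣ, and set c = !![1, 0; 1, 1] and d = !![1, 0; ν, 1] in SL₂(ZMod q). Then c⁻¹ is conjugate to d in SL₂(ZMod q) and d⁻¹ is conjugate to c in SL₂(ZMod q). -/

import Mathlib

theorem inv_conj_of_three_mod_four (q : ℕ) [Fact (Nat.Prime q)] (hq : Odd q)
    (hq4 : q % 4 = 3)
    (ν : (ZMod q)ˣ) (hν : ∀ x : (ZMod q)ˣ, x ∈ Subgroup.zpowers ν)
    (c d : Matrix.SpecialLinearGroup (Fin 2) (ZMod q))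
    (hc : (c : Matrix (Fin 2) (Fin 2) (ZMod q)) = !![1, 0; 1, 1])
    (hd : (d : Matrix (Fin 2) (Fin 2) (ZMod q)) = !![1, 0; (ν : ZMod q), 1]) :
    IsConj c⁻¹ d ∧ IsConj d⁻¹ c := by
  have hqp : Nat.Prime q := Fact.out
  have hq3 : 3 ≤ q := by
    rcases Nat.lt_or_ge q 3 with h | h
    · interval_cases q <;> omega
    · exact h
  -- order of ν is q - 1
  have hcard : orderOf ν = q - 1 := by
    rw [orderOf_eq_card_of_forall_mem_zpowers hν, Nat.card_eq_fintype_card,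
      ZMod.card_units_eq_totient, Nat.totient_prime hqp]
  -- ν is not a square
  have hν0 : (ν : ZMod q) ≠ 0 := ν.ne_zero
  have hns : ¬ IsSquare ((ν : ZMod q)) := by
    rintro ⟨x, hx⟩
    have := (ZMod.euler_criterion q hν0).mp ⟨x, hx⟩
    have hpow : (ν : (ZMod q)ˣ) ^ (q / 2) = 1 := Units.ext (by push_cast [this]; simp)
    have hdvd : orderOf ν ∣ q / 2 := orderOf_dvd_of_pow_eq_one hpow
    rw [hcard] at hdvd
    have := Nat.le_of_dvd (by omega) hdvd
    omega
  -- -1 is not a square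
  have hm1 : ¬ IsSquare (-1 : ZMod q) := by
    rw [ZMod.exists_sq_eq_neg_one_iff]
    simp [hq4]
  -- hence -ν is a square
  have hsq : IsSquare (-(ν : ZMod q)) := by
    by_contra h
    have h1 := quadraticChar_neg_one_iff_not_isSquare.mpr hns
    have h2 := quadraticChar_neg_one_iff_not_isSquare.mpr hm1
    have h3 := quadraticChar_neg_one_iff_not_isSquare.mpr h
    have : quadraticChar (ZMod q) (-(ν : ZMod q)) = 1 := by
      have : (-(ν : ZMod q)) = (-1) * ν := by ring
      rw [this, map_mul, h1, h2]; ring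
    rw [h3] at this
    have : (1 : ℤ) = -1 := this.symm
    norm_num at this
  obtain ⟨t, ht⟩ := hsq
  have ht2 : t * t = -(ν : ZMod q) := ht.symm
  have ht0 : t ≠ 0 := by
    intro h
    rw [h, mul_zero] at ht2
    exact hν0 (by simpa using ht2.symm)
  have htinv : t⁻¹ * t = 1 := inv_mul_cancel₀ ht0
  constructor
  · refine isConj_iff.mpr ⟨⟨!![t⁻¹, 0; 0, t], by
      simp [Matrix.det_fin_two_of, htinv]⟩, ?_⟩
    have hcinv : ((c⁻¹ : Matrix.SpecialLinearGroup (Fin 2) (ZMod q)) :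
        Matrix (Fin 2) (Fin 2) (ZMod q)) = !![1, 0; -1, 1] := by
      rw [Matrix.SpecialLinearGroup.coe_inv, hc, Matrix.adjugate_fin_two_of]
      norm_num
    apply Subtype.ext
    erw [Matrix.SpecialLinearGroup.coe_mul, Matrix.SpecialLinearGroup.coe_mul,
      hcinv, hd, Matrix.SpecialLinearGroup.coe_inv]
    rw [Matrix.adjugate_fin_two_of]
    ext i j
    fin_cases i <;> fin_cases j <;>
      simp [Matrix.mul_apply, Fin.sum_univ_succ, htinv] <;>
      (try field_simp) <;> (try linear_combination (-2 : ZMod q) * ht2) <;> (try linear_combination -ht2) <;> (try linear_combination ht2)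
  · refine isConj_iff.mpr ⟨⟨!![t, 0; 0, t⁻¹], by
      simp [Matrix.det_fin_two_of, mul_inv_cancel₀ ht0]⟩, ?_⟩
    have hdinv : ((d⁻¹ : Matrix.SpecialLinearGroup (Fin 2) (ZMod q)) :
        Matrix (Fin 2) (Fin 2) (ZMod q)) = !![1, 0; -(ν : ZMod q), 1] := by
      rw [Matrix.SpecialLinearGroup.coe_inv, hd, Matrix.adjugate_fin_two_of]
      norm_num
    apply Subtype.ext
    erw [Matrix.SpecialLinearGroup.coe_mul, Matrix.SpecialLinearGroup.coe_mul,
      hdinv, hc, Matrix.SpecialLinearGroup.coe_inv]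
    rw [Matrix.adjugate_fin_two_of]
    ext i j
    fin_cases i <;> fin_cases j <;>
      simp [Matrix.mul_apply, Fin.sum_univ_succ, htinv, mul_inv_cancel₀ ht0] <;>
      (try field_simp) <;> (try linear_combination (-2 : ZMod q) * ht2) <;> (try linear_combination -ht2) <;> (try linear_combination ht2)
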